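/- arXiv:1602.08730 — 10 statements merged into one kernel-verified Lean document; each statement's English description precedes it below -/
import Mathlib

section
/- Let δ > 0 be a real number and let n, r be natural numbers with r ≥ 1, n ≥ 1 and (n : ℝ)^{δ/2} ≥ 1000. Set q = (n : ℝ)^{−(2+δ)/2}. Then ∑_{i=r}^{n} (n choose i) · q^i · (1−q)^{n−i} ≤ 1.01 · n^{−δ·r/2} / r!. -/
open Real

lemma geom_sum_le_inv {x : ℝ} (h0 : 0 ≤ x) (h1 : x < 1) (k : ℕ) :
    ∑ i ∈ Finset.range k, x ^ i ≤ (1 - x)⁻¹ := by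
  have h := geom_sum_mul x k
  have hxk : 0 ≤ x ^ k := pow_nonneg h0 k
  rw [inv_eq_one_div, le_div_iff₀ (by linarith)]
  nlinarith

/-- Binomial tail bound: with `q = n^{-(2+δ)/2}` and `n^{δ/2} ≥ 1000`,
`∑_{i=r}^n C(n,i) q^i (1-q)^{n-i} ≤ 1.01 n^{-δ r / 2} / r!`. -/
theorem stmt2 (δ : ℝ) (hδ : 0 < δ) (n r : ℕ) (hr : 1 ≤ r) (hn : 1 ≤ n)
    (hbig : (1000 : ℝ) ≤ (n : ℝ) ^ (δ / 2)) :
    ∑ i ∈ Finset.Icc r n,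
        (n.choose i : ℝ) * ((n : ℝ) ^ (-(2 + δ) / 2)) ^ i
          * (1 - (n : ℝ) ^ (-(2 + δ) / 2)) ^ (n - i)
      ≤ 1.01 * (n : ℝ) ^ (-(δ * (r : ℝ)) / 2) / (Nat.factorial r : ℝ) := by
  have hn0 : (0:ℝ) < n := by exact_mod_cast Nat.lt_of_lt_of_le Nat.zero_lt_one hn
  have hn1 : (1:ℝ) ≤ n := by exact_mod_cast hn
  set q : ℝ := (n : ℝ) ^ (-(2 + δ) / 2) with hqdef
  set x : ℝ := (n : ℝ) ^ (-(δ / 2)) with hxdef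
  have hx0 : 0 < x := Real.rpow_pos_of_pos hn0 _
  have hxle : x ≤ 1/1000 := by
    rw [hxdef, Real.rpow_neg hn0.le]
    rw [inv_le_comm₀ (Real.rpow_pos_of_pos hn0 _) (by norm_num)]
    linarith
  have hq0 : 0 < q := Real.rpow_pos_of_pos hn0 _
  have hq1 : q ≤ 1 := Real.rpow_le_one_of_one_le_of_nonpos hn1 (by linarith)
  have nq : (n:ℝ) * q = x := by
    rw [hqdef, hxdef]
    nth_rewrite 1 [← Real.rpow_one (n:ℝ)]
    rw [← Real.rpow_add hn0]
    ring_nf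
  have hterm : ∀ i ∈ Finset.Icc r n,
      (n.choose i : ℝ) * q ^ i * (1 - q) ^ (n - i) ≤ x ^ i / (Nat.factorial r : ℝ) := by
    intro i hi
    obtain ⟨hri, hin⟩ := Finset.mem_Icc.mp hi
    have h1 : (1 - q) ^ (n - i) ≤ 1 := pow_le_one₀ (by linarith) (by linarith)
    have hfact : (Nat.factorial r : ℝ) ≤ (Nat.factorial i : ℝ) := by
      exact_mod_cast Nat.factorial_le hri
    calc (n.choose i : ℝ) * q ^ i * (1 - q) ^ (n-i)
        ≤ (n.choose i : ℝ) * q ^ i * 1 := by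
          apply mul_le_mul_of_nonneg_left h1 (by positivity)
      _ = (n.choose i : ℝ) * q ^ i := by ring
      _ ≤ ((n:ℝ)^i / (Nat.factorial i : ℝ)) * q ^ i := by
          gcongr
          exact_mod_cast Nat.choose_le_pow_div i n
      _ = x ^ i / (Nat.factorial i : ℝ) := by
          rw [div_mul_eq_mul_div, ← mul_pow, nq]
      _ ≤ x ^ i / (Nat.factorial r : ℝ) := by
          gcongr
          all_goals first | positivity | (exact_mod_cast Nat.factorial_pos r) | exact hfact
  have hxr : x ^ r = (n : ℝ) ^ (-(δ * (r : ℝ)) / 2) := by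
    rw [hxdef, ← Real.rpow_natCast ((n:ℝ) ^ (-(δ/2))) r, ← Real.rpow_mul hn0.le]
    congr 1; ring
  have hgeom : ∑ i ∈ Finset.Icc r n, x ^ i ≤ x ^ r * (1 - x)⁻¹ := by
    rw [← Finset.Ico_add_one_right_eq_Icc, Finset.sum_Ico_eq_sum_range]
    calc ∑ i ∈ Finset.range (n + 1 - r), x ^ (r + i)
        = x ^ r * ∑ i ∈ Finset.range (n + 1 - r), x ^ i := by
          rw [Finset.mul_sum]; congr 1; ext i; rw [pow_add]
      _ ≤ x ^ r * (1 - x)⁻¹ := by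
          gcongr
          all_goals first | positivity | exact geom_sum_le_inv hx0.le (by linarith) _
  have hinv : (1 - x)⁻¹ ≤ 1.01 := by
    rw [inv_le_comm₀ (by linarith) (by norm_num)]
    norm_num; linarith
  calc ∑ i ∈ Finset.Icc r n, (n.choose i : ℝ) * q ^ i * (1 - q) ^ (n-i)
      ≤ ∑ i ∈ Finset.Icc r n, x ^ i / (Nat.factorial r : ℝ) :=
        Finset.sum_le_sum hterm
    _ = (∑ i ∈ Finset.Icc r n, x ^ i) / (Nat.factorial r : ℝ) := by
        rw [Finset.sum_div]
    _ ≤ (x ^ r * (1 - x)⁻¹) / (Nat.factorial r : ℝ) := by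
        gcongr
        all_goals first | positivity | (exact_mod_cast Nat.factorial_pos r) | exact hgeom
    _ ≤ (x ^ r * 1.01) / (Nat.factorial r : ℝ) := by
        gcongr
        all_goals first | positivity | exact hinv
    _ = 1.01 * (n : ℝ) ^ (-(δ * (r : ℝ)) / 2) / (Nat.factorial r : ℝ) := by
        rw [hxr]; ring
end

section
/- Let α ≥ 1 be a real number and let i, n be natural numbers with 2α ≤ i ≤ n. Then ∏_{r=i+1}^{n} (1 − 4α²/r²) ≥ 16^{−α}. -/
noncomputable def Ffun (c k : ℕ) : ℝ := ((k+c).factorial * (k-c).factorial : ℝ) / (k.factorial)^2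

lemma Ffun_pos (c k : ℕ) : 0 < Ffun c k := by
  unfold Ffun
  positivity

lemma prod_eq_F (c m : ℕ) (hcm : c ≤ m) : ∀ n, m ≤ n →
    ∏ r ∈ Finset.Ioc m n, (1 - (c:ℝ)^2/(r:ℝ)^2) = Ffun c n / Ffun c m := by
  intro n
  induction n with
  | zero => intro h; have : m = 0 := Nat.le_zero.mp h; subst this; simp [div_self (ne_of_gt (Ffun_pos c 0))]
  | succ n ih =>
    intro h
    rcases Nat.lt_or_ge m (n+1) with hlt | hge
    · have hmn : m ≤ n := Nat.lt_succ_iff.mp hlt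
      rw [Finset.prod_Ioc_succ_top hmn, ih hmn]
      have hstep : Ffun c (n+1) = Ffun c n * (1 - (c:ℝ)^2/((n+1:ℕ):ℝ)^2) := by
        have hcn : c ≤ n := le_trans hcm hmn
        unfold Ffun
        have h1 : (n+1) + c = (n+c) + 1 := by omega
        have h2 : (n+1) - c = (n-c) + 1 := by omega
        rw [h1, h2, Nat.factorial_succ, Nat.factorial_succ (n-c), Nat.factorial_succ n]
        have h3 : ((n - c : ℕ) : ℝ) = (n : ℝ) - (c : ℝ) := by
          push_cast [Nat.cast_sub hcn]; ring
        push_cast [h3]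
        have hne : ((n:ℝ)+1) ≠ 0 := by positivity
        have hfe : (Nat.factorial n : ℝ) ≠ 0 := by positivity
        field_simp
        ring
      rw [hstep]
      have := Ffun_pos c n
      have hne2 : ((n+1:ℕ):ℝ)^2 ≠ 0 := by positivity
      field_simp
    · have : m = n+1 := le_antisymm h hge
      subst this
      simp [div_self (ne_of_gt (Ffun_pos c (n+1)))]

lemma one_le_F (c k : ℕ) (h : c ≤ k) : 1 ≤ Ffun c k := by
  unfold Ffun
  rw [le_div_iff₀ (by positivity), one_mul, sq]
  have e1 : Nat.choose k c * Nat.factorial c * Nat.factorial (k - c) = Nat.factorial k :=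
    Nat.choose_mul_factorial_mul_factorial h
  have e2 : Nat.choose (k+c) c * Nat.factorial c * Nat.factorial k = Nat.factorial (k+c) := by
    have := Nat.choose_mul_factorial_mul_factorial (show c ≤ k + c by omega)
    simpa using this
  have hmono : Nat.choose k c ≤ Nat.choose (k+c) c := Nat.choose_le_choose c (by omega)
  have : Nat.factorial k * Nat.factorial k ≤ Nat.factorial (k+c) * Nat.factorial (k-c) := by
    calc Nat.factorial k * Nat.factorial k
        = (Nat.choose k c * Nat.factorial c * Nat.factorial (k-c)) * Nat.factorial k := by rw [e1]
      _ ≤ (Nat.choose (k+c) c * Nat.factorial c * Nat.factorial (k-c)) * Nat.factorial k := by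
          exact Nat.mul_le_mul_right _ (Nat.mul_le_mul_right _ (Nat.mul_le_mul_right _ hmono))
      _ = (Nat.choose (k+c) c * Nat.factorial c * Nat.factorial k) * Nat.factorial (k-c) := by ring
      _ = Nat.factorial (k+c) * Nat.factorial (k-c) := by rw [e2]
  exact_mod_cast this

lemma central_le : ∀ b : ℕ, Nat.choose (2*b) b ≤ 4^b := by
  intro b
  calc Nat.choose (2*b) b ≤ Nat.choose (2*b+1) b := Nat.choose_le_choose b (by omega)
    _ ≤ 4^b := Nat.choose_middle_le_pow b

lemma fact_2b (b : ℕ) : Nat.factorial (2*b) ≤ 4^b * (Nat.factorial b * Nat.factorial b) := by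
  have e : Nat.choose (2*b) b * Nat.factorial b * Nat.factorial b = Nat.factorial (2*b) := by
    have := Nat.choose_mul_factorial_mul_factorial (show b ≤ 2*b by omega)
    have h2 : 2*b - b = b := by omega
    rwa [h2] at this
  calc Nat.factorial (2*b) = Nat.choose (2*b) b * Nat.factorial b * Nat.factorial b := e.symm
    _ ≤ 4^b * Nat.factorial b * Nat.factorial b := by
        exact Nat.mul_le_mul_right _ (Nat.mul_le_mul_right _ (central_le b))
    _ = 4^b * (Nat.factorial b * Nat.factorial b) := by ring

lemma F_bb (b : ℕ) : Ffun b b ≤ 4^b := by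
  unfold Ffun
  rw [div_le_iff₀ (by positivity)]
  have h1 : b + b = 2*b := by omega
  have h2 : b - b = 0 := by omega
  rw [h1, h2, sq]
  have h3 : ((2*b).factorial : ℝ) ≤ (4:ℝ)^b * ((b.factorial : ℝ) * b.factorial) := by
    exact_mod_cast fact_2b b
  simp only [Nat.factorial_zero, Nat.cast_one, mul_one]
  linarith

lemma F_b1b (b : ℕ) (hb : 2 ≤ b) : Ffun (b-1) b ≤ 4^(b-1) := by
  unfold Ffun
  rw [div_le_iff₀ (by positivity)]
  have h1 : b + (b-1) = 2*b - 1 := by omega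
  have h2 : b - (b-1) = 1 := by omega
  rw [h1, h2]
  simp only [Nat.factorial_one]
  have key : 4 * Nat.factorial (2*b-1) ≤ 4^b * (Nat.factorial b * Nat.factorial b) := by
    calc 4 * Nat.factorial (2*b-1) ≤ (2*b) * Nat.factorial (2*b-1) := by
          exact Nat.mul_le_mul_right _ (by omega)
      _ = Nat.factorial (2*b) := by
          have h5 : 2*b - 1 + 1 = 2*b := by omega
          calc (2*b) * Nat.factorial (2*b-1) = (2*b-1+1) * Nat.factorial (2*b-1) := by rw [h5]
            _ = Nat.factorial (2*b-1+1) := (Nat.factorial_succ _).symm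
            _ = Nat.factorial (2*b) := by rw [h5]
      _ ≤ 4^b * (Nat.factorial b * Nat.factorial b) := fact_2b b
  have key2 : (4:ℝ) * Nat.factorial (2*b-1) ≤ 4^b * (Nat.factorial b * Nat.factorial b) := by
    exact_mod_cast key
  have h4 : (4:ℝ)^b = 4^(b-1) * 4 := by
    rw [← pow_succ]; congr 1; omega
  rw [h4] at key2
  simp only [Nat.factorial_one, Nat.cast_one, mul_one, sq]
  linarith


open Real

set_option maxHeartbeats 1000000 in
/-- For `α ≥ 1` and integers `2α ≤ i ≤ n`: `∏_{r=i+1}^n (1 - 4α²/r²) ≥ 16^{-α}`. -/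
theorem stmt5 (α : ℝ) (hα : 1 ≤ α) (i n : ℕ) (h2α : 2 * α ≤ (i : ℝ)) (hin : i ≤ n) :
    (16 : ℝ) ^ (-α) ≤ ∏ r ∈ Finset.Icc (i + 1) n, (1 - 4 * α ^ 2 / (r : ℝ) ^ 2) := by
  have hα0 : (0:ℝ) ≤ 2*α := by linarith
  set b : ℕ := ⌈2*α⌉₊ with hbdef
  have hβb : 2*α ≤ (b:ℝ) := Nat.le_ceil _
  have hbβ : (b:ℝ) < 2*α + 1 := Nat.ceil_lt_add_one hα0
  have hb2 : 2 ≤ b := by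
    have h2b : (2:ℝ) ≤ (b:ℝ) := le_trans (by linarith) hβb
    exact_mod_cast h2b
  have hbi : b ≤ i := Nat.ceil_le.mpr h2α
  have hbn : b ≤ n := le_trans hbi hin
  set θ : ℝ := (b:ℝ) - 2*α with hθdef
  have hθ0 : 0 ≤ θ := by simp only [hθdef]; linarith
  have hθ1 : θ ≤ 1 := by simp only [hθdef]; linarith
  have hcast : ((b-1 : ℕ) : ℝ) = (b:ℝ) - 1 := by
    have : (1:ℕ) ≤ b := by omega
    push_cast [Nat.cast_sub this]; ring
  -- the two integer-parameter factor functions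
  set p1 : ℕ → ℝ := fun r => 1 - ((b-1 : ℕ):ℝ)^2/(r:ℝ)^2 with hp1def
  set p2 : ℕ → ℝ := fun r => 1 - ((b : ℕ):ℝ)^2/(r:ℝ)^2 with hp2def
  -- nonnegativity of p1, p2 on Ioc b n
  have hr_facts : ∀ r ∈ Finset.Ioc b n, ((b:ℝ) + 1 ≤ (r:ℝ)) := by
    intro r hr
    rw [Finset.mem_Ioc] at hr
    exact_mod_cast Nat.succ_le_of_lt hr.1
  have hp1nonneg : ∀ r ∈ Finset.Ioc b n, 0 ≤ p1 r := by
    intro r hr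
    have hx := hr_facts r hr
    have hb0 : (0:ℝ) ≤ (b:ℝ) := Nat.cast_nonneg b
    simp only [hp1def, hcast]
    have hx0 : (0:ℝ) < (r:ℝ) := by linarith
    rw [sub_nonneg, div_le_one (by positivity)]
    nlinarith
  have hp2nonneg : ∀ r ∈ Finset.Ioc b n, 0 ≤ p2 r := by
    intro r hr
    have hx := hr_facts r hr
    have hb0 : (0:ℝ) ≤ (b:ℝ) := Nat.cast_nonneg b
    simp only [hp2def]
    have hx0 : (0:ℝ) < (r:ℝ) := by linarith
    rw [sub_nonneg, div_le_one (by positivity)]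
    nlinarith
  -- integer-parameter product lower bounds
  have hQ1 : ∏ r ∈ Finset.Ioc b n, p1 r = Ffun (b-1) n / Ffun (b-1) b := by
    simpa using prod_eq_F (b-1) b (by omega) n hbn
  have hQ2 : ∏ r ∈ Finset.Ioc b n, p2 r = Ffun b n / Ffun b b := by
    simpa using prod_eq_F b b le_rfl n hbn
  have hQ1ge : ((4:ℝ)^(b-1))⁻¹ ≤ ∏ r ∈ Finset.Ioc b n, p1 r := by
    rw [hQ1, inv_eq_one_div]
    exact div_le_div₀ (le_trans zero_le_one (one_le_F (b-1) n (by omega)))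
      (one_le_F (b-1) n (by omega)) (Ffun_pos (b-1) b) (F_b1b b hb2)
  have hQ2ge : ((4:ℝ)^b)⁻¹ ≤ ∏ r ∈ Finset.Ioc b n, p2 r := by
    rw [hQ2, inv_eq_one_div]
    exact div_le_div₀ (le_trans zero_le_one (one_le_F b n hbn))
      (one_le_F b n hbn) (Ffun_pos b b) (F_bb b)
  -- per-factor geometric mean bound
  have hfac : ∀ r ∈ Finset.Ioc b n,
      p1 r ^ θ * p2 r ^ (1-θ) ≤ 1 - 4*α^2/(r:ℝ)^2 := by
    intro r hr
    have hx := hr_facts r hr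
    have hb0 : (0:ℝ) ≤ (b:ℝ) := Nat.cast_nonneg b
    have hx0 : (0:ℝ) < (r:ℝ) := by linarith
    have hgm := Real.geom_mean_le_arith_mean2_weighted hθ0 (by linarith : (0:ℝ) ≤ 1-θ)
      (hp1nonneg r hr) (hp2nonneg r hr) (by ring)
    refine le_trans hgm ?_
    simp only [hp1def, hp2def, hcast]
    have hx2 : (0:ℝ) < (r:ℝ)^2 := by positivity
    have key : (2*α)^2 ≤ θ*((b:ℝ)-1)^2 + (1-θ)*(b:ℝ)^2 := by nlinarith [mul_nonneg hθ0 (by linarith : (0:ℝ) ≤ 1-θ)]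
    have e1 : θ*(1-((b:ℝ)-1)^2/(r:ℝ)^2) + (1-θ)*(1-(b:ℝ)^2/(r:ℝ)^2)
        = 1 - (θ*((b:ℝ)-1)^2 + (1-θ)*(b:ℝ)^2)/(r:ℝ)^2 := by field_simp; ring
    rw [e1]
    have e2 : 4*α^2 = (2*α)^2 := by ring
    rw [e2]
    have : (2*α)^2/(r:ℝ)^2 ≤ (θ*((b:ℝ)-1)^2 + (1-θ)*(b:ℝ)^2)/(r:ℝ)^2 := by gcongr
    linarith
  -- assemble over Ioc b n
  have hmain : (16:ℝ)^(-α) ≤ ∏ r ∈ Finset.Ioc b n, (1 - 4*α^2/(r:ℝ)^2) := by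
    have hprodge : ∏ r ∈ Finset.Ioc b n, (p1 r ^ θ * p2 r ^ (1-θ))
        ≤ ∏ r ∈ Finset.Ioc b n, (1 - 4*α^2/(r:ℝ)^2) := by
      apply Finset.prod_le_prod
      · intro r hr
        exact mul_nonneg (Real.rpow_nonneg (hp1nonneg r hr) _) (Real.rpow_nonneg (hp2nonneg r hr) _)
      · exact hfac
    have hsplit : ∏ r ∈ Finset.Ioc b n, (p1 r ^ θ * p2 r ^ (1-θ))
        = (∏ r ∈ Finset.Ioc b n, p1 r) ^ θ * (∏ r ∈ Finset.Ioc b n, p2 r) ^ (1-θ) := by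
      rw [Finset.prod_mul_distrib, Real.finset_prod_rpow _ _ hp1nonneg θ,
        Real.finset_prod_rpow _ _ hp2nonneg (1-θ)]
    have hlow : ((4:ℝ)^(b-1))⁻¹ ^ θ * ((4:ℝ)^b)⁻¹ ^ (1-θ)
        ≤ (∏ r ∈ Finset.Ioc b n, p1 r) ^ θ * (∏ r ∈ Finset.Ioc b n, p2 r) ^ (1-θ) := by
      apply mul_le_mul
      · exact Real.rpow_le_rpow (by positivity) hQ1ge hθ0
      · exact Real.rpow_le_rpow (by positivity) hQ2ge (by linarith)
      · exact Real.rpow_nonneg (by positivity) _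
      · exact Real.rpow_nonneg (le_trans (by positivity) hQ1ge) _
    have hval : ((4:ℝ)^(b-1))⁻¹ ^ θ * ((4:ℝ)^b)⁻¹ ^ (1-θ) = (16:ℝ)^(-α) := by
      have h1 : ((4:ℝ)^(b-1))⁻¹ = (4:ℝ) ^ (-((b:ℝ)-1)) := by
        rw [← Real.rpow_natCast 4 (b-1), hcast, ← Real.rpow_neg (by norm_num)]
      have h2 : ((4:ℝ)^b)⁻¹ = (4:ℝ) ^ (-(b:ℝ)) := by
        rw [← Real.rpow_natCast 4 b, ← Real.rpow_neg (by norm_num)]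
      rw [h1, h2, ← Real.rpow_mul (by norm_num), ← Real.rpow_mul (by norm_num),
        ← Real.rpow_add (by norm_num)]
      have h16 : (16:ℝ) = (4:ℝ) ^ (2:ℝ) := by
        rw [show (2:ℝ) = ((2:ℕ):ℝ) by norm_num, Real.rpow_natCast]; norm_num
      rw [h16, ← Real.rpow_mul (by norm_num)]
      congr 1
      simp only [hθdef]
      ring
    calc (16:ℝ)^(-α) = ((4:ℝ)^(b-1))⁻¹ ^ θ * ((4:ℝ)^b)⁻¹ ^ (1-θ) := hval.symm
      _ ≤ _ := hlow
      _ = ∏ r ∈ Finset.Ioc b n, (p1 r ^ θ * p2 r ^ (1-θ)) := hsplit.symm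
      _ ≤ _ := hprodge
  -- compare Ioc b n with Ioc i n
  have hIcc : Finset.Icc (i+1) n = Finset.Ioc i n := by
    rw [← Finset.Icc_add_one_left_eq_Ioc]
  rw [hIcc]
  have hconsec : (∏ r ∈ Finset.Ioc b i, (1 - 4*α^2/(r:ℝ)^2)) *
      (∏ r ∈ Finset.Ioc i n, (1 - 4*α^2/(r:ℝ)^2)) = ∏ r ∈ Finset.Ioc b n, (1 - 4*α^2/(r:ℝ)^2) :=
    Finset.prod_Ioc_consecutive _ hbi hin
  have hInonneg : 0 ≤ ∏ r ∈ Finset.Ioc i n, (1 - 4*α^2/(r:ℝ)^2) := by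
    apply Finset.prod_nonneg
    intro r hr
    rw [Finset.mem_Ioc] at hr
    have hx : (i:ℝ) + 1 ≤ (r:ℝ) := by exact_mod_cast Nat.succ_le_of_lt hr.1
    have hx0 : (0:ℝ) < (r:ℝ) := by linarith [(Nat.cast_nonneg i : (0:ℝ) ≤ i)]
    rw [sub_nonneg, div_le_one (by positivity)]
    nlinarith [(Nat.cast_nonneg i : (0:ℝ) ≤ i)]
  have hBle1 : ∏ r ∈ Finset.Ioc b i, (1 - 4*α^2/(r:ℝ)^2) ≤ 1 := by
    apply Finset.prod_le_one
    · intro r hr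
      rw [Finset.mem_Ioc] at hr
      have hx : (b:ℝ) + 1 ≤ (r:ℝ) := by exact_mod_cast Nat.succ_le_of_lt hr.1
      have hx0 : (0:ℝ) < (r:ℝ) := by linarith [(Nat.cast_nonneg b : (0:ℝ) ≤ b)]
      rw [sub_nonneg, div_le_one (by positivity)]
      nlinarith [(Nat.cast_nonneg b : (0:ℝ) ≤ b)]
    · intro r hr
      have : (0:ℝ) ≤ 4*α^2/(r:ℝ)^2 := by positivity
      linarith
  calc (16:ℝ)^(-α) ≤ ∏ r ∈ Finset.Ioc b n, (1 - 4*α^2/(r:ℝ)^2) := hmain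
    _ = (∏ r ∈ Finset.Ioc b i, (1 - 4*α^2/(r:ℝ)^2)) *
        (∏ r ∈ Finset.Ioc i n, (1 - 4*α^2/(r:ℝ)^2)) := hconsec.symm
    _ ≤ 1 * ∏ r ∈ Finset.Ioc i n, (1 - 4*α^2/(r:ℝ)^2) := by
        apply mul_le_mul_of_nonneg_right hBle1 hInonneg
    _ = _ := one_mul _
end

section
/- Let c > 1 and let i, n be real numbers with 1 ≤ i ≤ n. Then the function k ↦ f(i,n,k) is nondecreasing and concave on the set of reals k ≥ 0. -/
open Real

/-- `f(i,n,k) = log( ((i/n)^{2/(c+1)-1}(2k+(c-1)n) - 2k) / ((c-1)i) )`. -/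
noncomputable def oddf (c i n k : ℝ) : ℝ :=
  Real.log (((i / n) ^ (2 / (c + 1) - 1) * (2 * k + (c - 1) * n) - 2 * k) / ((c - 1) * i))

/-- For `c > 1` and `1 ≤ i ≤ n`, the map `k ↦ f(i,n,k)` is nondecreasing and concave
on `k ≥ 0`. -/
theorem stmt8 (c i n : ℝ) (hc : 1 < c) (hi : 1 ≤ i) (hin : i ≤ n) :
    MonotoneOn (fun k : ℝ => oddf c i n k) (Set.Ici 0) ∧
    ConcaveOn ℝ (Set.Ici 0) (fun k : ℝ => oddf c i n k) := by
  have hi0 : 0 < i := lt_of_lt_of_le one_pos hi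
  have hn0 : 0 < n := lt_of_lt_of_le hi0 hin
  set a := (i / n) ^ (2 / (c + 1) - 1) with ha
  have hc1 : (0:ℝ) < c - 1 := by linarith
  have hexp : 2 / (c + 1) - 1 ≤ 0 := by
    have h2 : 2 / (c + 1) ≤ 1 := by
      rw [div_le_one (by linarith)]; linarith
    linarith
  have ha1 : 1 ≤ a :=
    Real.one_le_rpow_of_pos_of_le_one_of_nonpos (div_pos hi0 hn0)
      ((div_le_one hn0).2 hin) hexp
  have hd : 0 < (c - 1) * i := mul_pos hc1 hi0
  have hnum : ∀ k : ℝ, 0 ≤ k → 0 < a * (2 * k + (c - 1) * n) - 2 * k := by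
    intro k hk
    nlinarith [mul_pos hc1 hn0]
  have harg : ∀ k : ℝ, 0 ≤ k →
      0 < (a * (2 * k + (c - 1) * n) - 2 * k) / ((c - 1) * i) := by
    intro k hk
    exact div_pos (hnum k hk) hd
  constructor
  · intro x hx y hy hxy
    simp only [oddf, ← ha]
    apply Real.log_le_log (harg x hx)
    apply div_le_div_of_nonneg_right ?_ hd.le
    nlinarith
  · refine ⟨convex_Ici 0, ?_⟩
    intro x hx y hy α β hα hβ hαβ
    simp only [oddf, ← ha, smul_eq_mul]
    have hb : β = 1 - α := by linarith
    subst hb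
    have key := strictConcaveOn_log_Ioi.concaveOn.2 (Set.mem_Ioi.2 (harg x hx))
      (Set.mem_Ioi.2 (harg y hy)) hα hβ hαβ
    simp only [smul_eq_mul] at key
    have heq : (a * (2 * (α * x + (1 - α) * y) + (c - 1) * n) - 2 * (α * x + (1 - α) * y)) /
        ((c - 1) * i) =
        α * ((a * (2 * x + (c - 1) * n) - 2 * x) / ((c - 1) * i)) +
        (1 - α) * ((a * (2 * y + (c - 1) * n) - 2 * y) / ((c - 1) * i)) := by
      field_simp
      ring
    rw [heq]
    exact key
end

section
/- Let c ≥ 3 and let i, n, k be real numbers with 1 ≤ i, i + 1 ≤ n, and k ≥ n. Then 2/n + f(i, n−1, k·e^{−2/n}) ≤ f(i, n, k). -/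
open Real


lemma expbound (y : ℝ) (h0 : 0 ≤ y) (h2 : y ≤ 1/2) :
    Real.exp (2*y) * ((1-y)*(1-2*y)) ≤ 1 := by
  have h1 : (1-y)*(1-2*y) ≤ Real.exp (-3*y+2*y^2) := by
    have := Real.add_one_le_exp (-3*y+2*y^2)
    nlinarith
  calc Real.exp (2*y) * ((1-y)*(1-2*y)) ≤ Real.exp (2*y) * Real.exp (-3*y+2*y^2) := by
        exact mul_le_mul_of_nonneg_left h1 (Real.exp_pos _).le
    _ = Real.exp (2*y^2 - y) := by rw [← Real.exp_add]; ring_nf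
    _ ≤ 1 := by
        rw [Real.exp_le_one_iff]
        nlinarith

lemma key (m x t : ℝ) (hm : 2 ≤ m) (ht : t = m/(m+2)) (hx : 0 ≤ x) (hx2 : x ≤ 1/2) :
    2*(1-x)^t + m*(Real.exp (2*x)*(1-x)^(t+1)) ≤ m + 2 := by
  have hm2 : (0:ℝ) < m + 2 := by linarith
  have ht0 : 0 < t := by rw [ht]; positivity
  have ht1 : t < 1 := by rw [ht]; rw [div_lt_one hm2]; linarith
  have hmt : m * (1 - t) = 2 * t := by
    rw [ht]; field_simp; ring
  set φ : ℝ → ℝ := fun y => 2*(1-y)^t + m*(Real.exp (2*y)*(1-y)^(t+1)) with hφ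
  have hanti : AntitoneOn φ (Set.Icc 0 (1/2)) := by
    apply antitoneOn_of_deriv_nonpos (convex_Icc 0 (1/2))
    · apply ContinuousOn.add
      · exact continuousOn_const.mul (ContinuousOn.rpow_const
          (continuousOn_const.sub continuousOn_id) (fun y _ => Or.inr ht0.le))
      · exact continuousOn_const.mul ((Real.continuous_exp.comp (continuous_const.mul continuous_id)).continuousOn.mul
          (ContinuousOn.rpow_const (continuousOn_const.sub continuousOn_id) (fun y _ => Or.inr (by linarith))))
    · intro y hy
      rw [interior_Icc] at hy
      have hne : (1:ℝ) - y ≠ 0 := by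
        have := hy.2; intro h; rw [Set.mem_Ioo] at hy; nlinarith [hy.1, hy.2]
      have h1 : HasDerivAt (fun y : ℝ => 1 - y) (-1) y := (hasDerivAt_id y).const_sub 1
      have h2 : HasDerivAt (fun y : ℝ => (1-y)^t) ((-1)*t*(1-y)^(t-1)) y :=
        h1.rpow_const (Or.inl hne)
      have h3 : HasDerivAt (fun y : ℝ => Real.exp (2*y)) (Real.exp (2*y)*(2*1)) y :=
        ((hasDerivAt_id y).const_mul 2).exp
      have h4 : HasDerivAt (fun y : ℝ => (1-y)^(t+1)) ((-1)*(t+1)*(1-y)^(t+1-1)) y :=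
        h1.rpow_const (Or.inl hne)
      exact ((h2.const_mul 2).add ((h3.mul h4).const_mul m)).differentiableAt.differentiableWithinAt
    · intro y hy
      rw [interior_Icc, Set.mem_Ioo] at hy
      have hy1 : 0 < 1 - y := by nlinarith [hy.1, hy.2]
      have hne : (1:ℝ) - y ≠ 0 := ne_of_gt hy1
      have h1 : HasDerivAt (fun y : ℝ => 1 - y) (-1) y := (hasDerivAt_id y).const_sub 1
      have h2 : HasDerivAt (fun y : ℝ => (1-y)^t) ((-1)*t*(1-y)^(t-1)) y :=
        h1.rpow_const (Or.inl hne)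
      have h3 : HasDerivAt (fun y : ℝ => Real.exp (2*y)) (Real.exp (2*y)*(2*1)) y :=
        ((hasDerivAt_id y).const_mul 2).exp
      have h4 : HasDerivAt (fun y : ℝ => (1-y)^(t+1)) ((-1)*(t+1)*(1-y)^(t+1-1)) y :=
        h1.rpow_const (Or.inl hne)
      have hD : HasDerivAt φ
          (2*((-1)*t*(1-y)^(t-1)) + m*(Real.exp (2*y)*(2*1)*(1-y)^(t+1) +
            Real.exp (2*y)*((-1)*(t+1)*(1-y)^(t+1-1)))) y :=
        (h2.const_mul 2).add ((h3.mul h4).const_mul m)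
      rw [hD.deriv]
      -- rewrite powers in terms of p := (1-y)^(t-1)
      set p := (1-y)^(t-1) with hp
      have hp0 : 0 < p := Real.rpow_pos_of_pos hy1 _
      have e1 : (1-y)^t = p * (1-y) := by
        rw [hp, ← Real.rpow_add_one hne (t-1)]; norm_num
      have e2 : (1-y)^(t+1) = p * (1-y) * (1-y) := by
        rw [← e1, ← Real.rpow_add_one hne t]
      have e3 : (1-y)^(t+1-1) = p * (1-y) := by
        rw [show t+1-1 = t by ring, e1]
      rw [e2, e3]
      -- key bound: exp(2y)*(1-y)*(2t - 2my) ≤ 2t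
      have hEy : 0 < Real.exp (2*y) := Real.exp_pos _
      have hcore : Real.exp (2*y) * ((1-y) * (2*t - 2*m*y)) ≤ 2*t := by
        rcases le_or_gt (2*t - 2*m*y) 0 with h | h
        · have : Real.exp (2*y) * ((1-y) * (2*t - 2*m*y)) ≤ 0 := by
            apply mul_nonpos_of_nonneg_of_nonpos hEy.le
            exact mul_nonpos_of_nonneg_of_nonpos hy1.le h
          linarith
        · have hb : 2*t - 2*m*y ≤ 2*t*(1-2*y) := by nlinarith [hy.1]
          have := expbound y hy.1.le hy.2.le
          nlinarith [mul_pos hEy hy1]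
      have heq : 2*((-1)*t*p) + m*(Real.exp (2*y)*(2*1)*(p*(1-y)*(1-y)) +
          Real.exp (2*y)*((-1)*(t+1)*(p*(1-y))))
          = p*(Real.exp (2*y)*((1-y)*(2*t-2*m*y))) - 2*t*p := by
        linear_combination (p * Real.exp (2*y) * (1-y)) * hmt
      rw [heq]
      have := mul_le_mul_of_nonneg_left hcore hp0.le
      linarith
  have h0mem : (0:ℝ) ∈ Set.Icc (0:ℝ) (1/2) := by constructor <;> norm_num
  have hxmem : x ∈ Set.Icc (0:ℝ) (1/2) := ⟨hx, hx2⟩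
  have := hanti h0mem hxmem hx
  have hφ0 : φ 0 = m + 2 := by
    simp only [hφ]
    norm_num
    ring
  rw [hφ0] at this
  exact this

set_option maxHeartbeats 1000000 in
/-- For `c ≥ 3`, `1 ≤ i`, `i + 1 ≤ n`, `k ≥ n`:
`2/n + f(i, n-1, k e^{-2/n}) ≤ f(i,n,k)`. -/
theorem stmt11 (c i n k : ℝ) (hc : 3 ≤ c) (hi : 1 ≤ i) (hin : i + 1 ≤ n) (hk : n ≤ k) :
    2 / n + oddf c i (n - 1) (k * Real.exp (-(2 / n))) ≤ oddf c i n k := by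
  have hi0 : 0 < i := by linarith
  have hn2 : 2 ≤ n := by linarith
  have hn0 : 0 < n := by linarith
  have hn1 : (0:ℝ) < n - 1 := by linarith
  have hii : i ≤ n - 1 := by linarith
  have hk0 : 0 < k := by linarith
  have hm : 2 ≤ c - 1 := by linarith
  have hcp : (0:ℝ) < c + 1 := by linarith
  set a := 2 / (c + 1) - 1 with ha
  set t := (c - 1) / (c + 1) with hts
  have hat : a + t = 0 := by rw [ha, hts]; field_simp; ring
  have ha0 : a ≤ 0 := by nlinarith [hat, div_pos (by linarith : (0:ℝ) < c - 1) hcp]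
  set A := (i / n) ^ a with hA
  set B := (i / (n - 1)) ^ a with hB
  have hA1 : 1 ≤ A := Real.one_le_rpow_of_pos_of_le_one_of_nonpos (div_pos hi0 hn0)
    (by rw [div_le_one hn0]; linarith) ha0
  have hB1 : 1 ≤ B := Real.one_le_rpow_of_pos_of_le_one_of_nonpos (div_pos hi0 hn1)
    (by rw [div_le_one hn1]; linarith) ha0
  set E := Real.exp (2 / n) with hE
  set K' := k * Real.exp (-(2 / n)) with hK'
  have hK0 : 0 < K' := mul_pos hk0 (Real.exp_pos _)
  have hEK : E * K' = k := by
    rw [hE, hK']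
    rw [show Real.exp (2/n) * (k * Real.exp (-(2/n))) = k * (Real.exp (2/n) * Real.exp (-(2/n))) by ring]
    rw [← Real.exp_add]
    norm_num
  have hden : (0:ℝ) < (c - 1) * i := mul_pos (by linarith) hi0
  set Lnum := B * (2 * K' + (c - 1) * (n - 1)) - 2 * K' with hLn
  set Rnum := A * (2 * k + (c - 1) * n) - 2 * k with hRn
  have hLpos : 0 < Lnum := by
    have h1 : 2 * K' + (c - 1) * (n - 1) ≤ B * (2 * K' + (c - 1) * (n - 1)) :=
      le_mul_of_one_le_left (by nlinarith [hK0, hn1, hm]) hB1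
    nlinarith [hn1, hm]
  have hRpos : 0 < Rnum := by
    have h1 : 2 * k + (c - 1) * n ≤ A * (2 * k + (c - 1) * n) :=
      le_mul_of_one_le_left (by nlinarith [hk0, hn0, hm]) hA1
    nlinarith [hn0, hm]
  -- the key multiplicative inequality
  have hq1 : (0:ℝ) < 1 - 1 / n := by
    have : 1 / n ≤ 1 / 2 := by
      rw [div_le_div_iff₀ hn0 two_pos]; linarith
    linarith
  have hBA : A * (1 - 1/n) ^ t = B := by
    have hfrac : i / (n - 1) * ((n - 1) / n) = i / n := by
      field_simp
    have hmul : A = B * ((n - 1) / n) ^ a := by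
      rw [hA, hB, ← Real.mul_rpow (by positivity) (by positivity), hfrac]
    have h1n : (1 : ℝ) - 1 / n = (n - 1) / n := by field_simp
    have hq : ((n - 1) / n) ^ t * ((n - 1) / n) ^ a = 1 := by
      rw [← Real.rpow_add (by positivity), show t + a = 0 by linarith [hat], Real.rpow_zero]
    rw [hmul, h1n]
    calc B * ((n-1)/n) ^ a * ((n-1)/n) ^ t = B * (((n-1)/n) ^ t * ((n-1)/n) ^ a) := by ring
      _ = B := by rw [hq, mul_one]
  have hx2 : 1 / n ≤ 1 / 2 := by
    rw [div_le_div_iff₀ hn0 two_pos]; linarith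
  have hkey : 2*(1 - 1/n)^t + (c-1)*(Real.exp (2*(1/n))*(1 - 1/n)^(t+1)) ≤ (c-1) + 2 := by
    apply key (c-1) (1/n) t hm _ (by positivity) hx2
    rw [hts]; ring_nf
  set q := (1 - 1/n) ^ t with hqd
  have hq0 : 0 < q := Real.rpow_pos_of_pos hq1 _
  have hqle1 : q ≤ 1 := Real.rpow_le_one hq1.le (by linarith [one_div_pos.mpr hn0]) (by positivity)
  have hqp1 : (1 - 1/n) ^ (t+1) = q * (1 - 1/n) := by
    rw [hqd, ← Real.rpow_add_one (ne_of_gt hq1)]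
  have hexp : Real.exp (2*(1/n)) = E := by rw [hE]; ring_nf
  rw [hqp1, hexp] at hkey
  -- multiply key by n
  have hkey' : q * (2*n + (c-1)*(E*(n-1))) ≤ ((c-1)+2) * n := by
    have h1 : (2*q + (c-1)*(E*(q*(1 - 1/n)))) * n ≤ ((c-1)+2) * n :=
      mul_le_mul_of_nonneg_right hkey hn0.le
    have hinv : n * (1/n) = 1 := by field_simp
    have heq : q * (2*n + (c-1)*(E*(n-1))) = (2*q + (c-1)*(E*(q*(1 - 1/n)))) * n := by
      linear_combination ((c-1)*q*E) * hinv
    rw [heq]; exact h1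
  -- add slack from k ≥ n
  have hqk : q * (2*(k-n)) ≤ 1 * (2*(k-n)) :=
    mul_le_mul_of_nonneg_right hqle1 (by linarith)
  have hmain0 : q * (2*k + E*((c-1)*(n-1))) ≤ 2*k + (c-1)*n := by nlinarith [hkey', hqk]
  -- lift by A
  have hmain : B * (2*k + E*((c-1)*(n-1))) ≤ A * (2*k + (c-1)*n) := by
    have h1 : A * (q * (2*k + E*((c-1)*(n-1)))) ≤ A * (2*k + (c-1)*n) :=
      mul_le_mul_of_nonneg_left hmain0 (by linarith)
    calc B * (2*k + E*((c-1)*(n-1))) = A * q * (2*k + E*((c-1)*(n-1))) := by rw [hBA]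
      _ = A * (q * (2*k + E*((c-1)*(n-1)))) := by ring
      _ ≤ A * (2*k + (c-1)*n) := h1
  -- numerator inequality
  have hnum : E * Lnum ≤ Rnum := by
    have heq : E * Lnum = B * (2*k + E*((c-1)*(n-1))) - 2*k := by
      rw [hLn]
      linear_combination (2*B - 2) * hEK
    rw [heq, hRn]
    linarith [hmain]
  -- log bookkeeping
  rw [oddf, oddf]
  rw [show (2:ℝ)/n = Real.log E by rw [hE, Real.log_exp]]
  have hLeq : (i / (n-1)) ^ (2/(c+1) - 1) * (2 * K' + (c - 1) * (n-1)) - 2 * K' = Lnum := rfl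
  have hReq : (i / n) ^ (2/(c+1) - 1) * (2 * k + (c - 1) * n) - 2 * k = Rnum := rfl
  rw [hLeq, hReq]
  have hLd : 0 < Lnum / ((c-1)*i) := div_pos hLpos hden
  rw [← Real.log_mul (Real.exp_ne_zero _) (ne_of_gt hLd)]
  apply Real.log_le_log (by positivity)
  rw [← hE, ← mul_div_assoc]
  gcongr
end

section
/- Let i, r be natural numbers with 100 ≤ i ≤ r, let γ be a real number with γ ≥ 2·log r, and let a be a real number with 0 < a < 1. Define F : (0,∞) → ℝ by F(x) = γ·(1 − (log(x/i))²/(log(x/r))²) if x ≤ 1 and F(x) = 2·log(r/i) if x > 1. Let (Ω, μ) be a probability space and A : Ω → ℝ a measurable function with A(ω) > 0 almost everywhere, with A integrable, ω ↦ F(A(ω)) integrable, and ∫ A dμ ≤ a. Then ∫ F(A(ω)) dμ(ω) ≤ γ·(1 − (log(a/i))²/(log(a/r))²). -/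
open MeasureTheory Real Set

lemma stmt13_tangent (γ I R a : ℝ) (hI : 2 ≤ I) (hIR : I ≤ R) (hγ : 2 * R ≤ γ)
    (ha0 : 0 < a) (ha1 : a < 1) :
    ∃ m : ℝ, 0 ≤ m ∧ ∀ x : ℝ, 0 < x →
      (if x ≤ 1 then γ * (1 - (Real.log x - I) ^ 2 / (Real.log x - R) ^ 2)
        else 2 * (R - I))
        ≤ γ * (1 - (Real.log a - I) ^ 2 / (Real.log a - R) ^ 2) + m * (x - a) := by
  have hγ0 : (0:ℝ) < γ := by linarith
  set G : ℝ → ℝ := fun x => γ * (1 - (Real.log x - I) ^ 2 / (Real.log x - R) ^ 2) with hGdef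
  set G' : ℝ → ℝ := fun x =>
    2 * γ * (R - I) * ((Real.log x - I) / (x * (Real.log x - R) ^ 3)) with hG'def
  set G'' : ℝ → ℝ := fun x =>
    2 * γ * (R - I) *
      (((Real.log x - R) - (Real.log x - I) * (Real.log x - R + 3)) /
        (x ^ 2 * (Real.log x - R) ^ 4)) with hG''def
  have hder : ∀ x ∈ Ioo (0:ℝ) 1, HasDerivAt G (G' x) x := by
    intro x hx
    have hx0 : (0:ℝ) < x := hx.1
    have hL : Real.log x < 0 := Real.log_neg hx0 hx.2
    have hLR : Real.log x - R ≠ 0 := by intro h; nlinarith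
    have hlog := Real.hasDerivAt_log hx0.ne'
    have h1 : HasDerivAt (fun y => Real.log y - I) x⁻¹ x := hlog.sub_const I
    have h2 : HasDerivAt (fun y => Real.log y - R) x⁻¹ x := hlog.sub_const R
    have h3 := (h1.pow 2).div (h2.pow 2) (pow_ne_zero 2 hLR)
    have h4 := ((hasDerivAt_const x (1:ℝ)).sub h3).const_mul γ
    convert h4 using 1
    · rfl
    · rfl
    · rfl
    simp only [hG'def, Pi.pow_apply]
    field_simp [hx0.ne', hLR]
    ring
  have hder2 : ∀ x ∈ Ioo (0:ℝ) 1, HasDerivAt G' (G'' x) x := by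
    intro x hx
    have hx0 : (0:ℝ) < x := hx.1
    have hL : Real.log x < 0 := Real.log_neg hx0 hx.2
    have hLR : Real.log x - R ≠ 0 := by intro h; nlinarith
    have hlog := Real.hasDerivAt_log hx0.ne'
    have h1 : HasDerivAt (fun y => Real.log y - I) x⁻¹ x := hlog.sub_const I
    have h2 : HasDerivAt (fun y => Real.log y - R) x⁻¹ x := hlog.sub_const R
    have hq : HasDerivAt (fun y => y * (Real.log y - R) ^ 3)
        (1 * (Real.log x - R) ^ 3 + x * ((3:ℕ) * (Real.log x - R) ^ 2 * x⁻¹)) x :=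
      (hasDerivAt_id x).mul (h2.pow 3)
    have hqne : x * (Real.log x - R) ^ 3 ≠ 0 := mul_ne_zero hx0.ne' (pow_ne_zero 3 hLR)
    have h5 := (h1.div hq hqne).const_mul (2 * γ * (R - I))
    convert h5 using 1
    · rfl
    · rfl
    · rfl
    simp only [hG''def]
    field_simp [hx0.ne', hLR]
    ring
  have hnonpos : ∀ x ∈ Ioo (0:ℝ) 1, G'' x ≤ 0 := by
    intro x hx
    have hx0 : (0:ℝ) < x := hx.1
    have hL : Real.log x < 0 := Real.log_neg hx0 hx.2
    have hLR : Real.log x - R ≠ 0 := by intro h; nlinarith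
    have hnum : (Real.log x - R) - (Real.log x - I) * (Real.log x - R + 3) ≤ 0 := by
      nlinarith [mul_nonneg (by linarith : (0:ℝ) ≤ R - I)
          (by linarith : (0:ℝ) ≤ 1 + I - Real.log x),
        mul_nonneg (by linarith : (0:ℝ) ≤ I - Real.log x)
          (by linarith : (0:ℝ) ≤ I - Real.log x - 2)]
    have hden : (0:ℝ) < x ^ 2 * (Real.log x - R) ^ 4 :=
      mul_pos (by positivity) (lt_of_le_of_ne (by positivity) (Ne.symm (pow_ne_zero 4 hLR)))
    have h1 : (0:ℝ) ≤ 2 * γ * (R - I) := by nlinarith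
    exact mul_nonpos_of_nonneg_of_nonpos h1 (div_nonpos_of_nonpos_of_nonneg hnum hden.le)
  have hcont : ContinuousOn G (Ioc (0:ℝ) 1) := by
    intro x hx
    have hx0 : (0:ℝ) < x := hx.1
    have hL : Real.log x ≤ 0 := Real.log_nonpos hx0.le hx.2
    have hLR : Real.log x - R ≠ 0 := by intro h; nlinarith
    have hlogc : ContinuousAt Real.log x := Real.continuousAt_log hx0.ne'
    exact (continuousAt_const.mul (continuousAt_const.sub
      (((hlogc.sub continuousAt_const).pow 2).div
        ((hlogc.sub continuousAt_const).pow 2) (pow_ne_zero 2 hLR)))).continuousWithinAt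
  have hconc : ConcaveOn ℝ (Ioc (0:ℝ) 1) G := by
    refine concaveOn_of_hasDerivWithinAt2_nonpos (convex_Ioc 0 1) hcont
      (f' := G') (f'' := G'') ?_ ?_ ?_
    · intro x hx; rw [interior_Ioc] at hx; exact (hder x hx).hasDerivWithinAt
    · intro x hx; rw [interior_Ioc] at hx; exact (hder2 x hx).hasDerivWithinAt
    · intro x hx; rw [interior_Ioc] at hx; exact hnonpos x hx
  have haIoo : a ∈ Ioo (0:ℝ) 1 := ⟨ha0, ha1⟩
  have haS : a ∈ Ioc (0:ℝ) 1 := ⟨ha0, ha1.le⟩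
  have hda : HasDerivAt G (G' a) a := hder a haIoo
  have hLa : Real.log a < 0 := Real.log_neg ha0 ha1
  have hm0 : 0 ≤ G' a := by
    have h1 : (0:ℝ) ≤ 2 * γ * (R - I) := by nlinarith
    have hcube : (Real.log a - R) ^ 3 < 0 := by
      apply Odd.pow_neg ⟨1, by norm_num⟩; nlinarith
    have hden : a * (Real.log a - R) ^ 3 < 0 := mul_neg_of_pos_of_neg ha0 hcube
    refine mul_nonneg h1 (div_nonneg_iff.2 (Or.inr ⟨by nlinarith, hden.le⟩))
  have htan : ∀ y ∈ Ioc (0:ℝ) 1, G y ≤ G a + G' a * (y - a) := by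
    intro y hy
    rcases lt_trichotomy y a with h | h | h
    · have hs := hconc.le_slope_of_hasDerivAt hy haS h hda
      rw [slope_def_field] at hs
      rw [le_div_iff₀ (by linarith : (0:ℝ) < a - y)] at hs
      nlinarith
    · subst h; simp
    · have hs := hconc.slope_le_of_hasDerivAt haS hy h hda
      rw [slope_def_field] at hs
      rw [div_le_iff₀ (by linarith : (0:ℝ) < y - a)] at hs
      nlinarith
  refine ⟨G' a, hm0, fun x hx0 => ?_⟩
  by_cases hx1 : x ≤ 1
  · rw [if_pos hx1]
    exact htan x ⟨hx0, hx1⟩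
  · rw [if_neg hx1]
    push_neg at hx1
    have hG1 : G 1 ≤ G a + G' a * (1 - a) := htan 1 ⟨one_pos, le_refl 1⟩
    have hG1v : G 1 = γ * (1 - I ^ 2 / R ^ 2) := by
      simp only [hGdef]
      rw [Real.log_one]
      ring
    have hR0 : (0:ℝ) < R := by linarith
    have h2 : 2 * (R - I) ≤ γ * (1 - I ^ 2 / R ^ 2) := by
      have hrw : γ * (1 - I ^ 2 / R ^ 2) = γ * (R ^ 2 - I ^ 2) / R ^ 2 := by
        field_simp
        try ring
      rw [hrw, le_div_iff₀ (by positivity : (0:ℝ) < R ^ 2)]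
      nlinarith [mul_nonneg (mul_nonneg (by linarith : (0:ℝ) ≤ γ - 2 * R)
          (by linarith : (0:ℝ) ≤ R - I)) (by linarith : (0:ℝ) ≤ R + I),
        mul_nonneg (mul_nonneg (by linarith : (0:ℝ) ≤ 2 * R)
          (by linarith : (0:ℝ) ≤ R - I)) (by linarith : (0:ℝ) ≤ I)]
    have hGa : G a = γ * (1 - (Real.log a - I) ^ 2 / (Real.log a - R) ^ 2) := rfl
    nlinarith [mul_nonneg hm0 (by linarith : (0:ℝ) ≤ x - 1), hGa, hG1, hG1v, h2]

/-- Jensen-type bound for the function `f(i,r,·,γ)`: if `F(x) = γ(1 - (log(x/i))²/(log(x/r))²)`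
for `0 < x ≤ 1` and `F(x) = 2 log(r/i)` for `x > 1`, and `A > 0` a.e. with `∫ A dμ ≤ a < 1`,
then `∫ F(A) dμ ≤ γ(1 - (log(a/i))²/(log(a/r))²)`. -/
theorem stmt13 {Ω : Type*} [MeasurableSpace Ω] (μ : Measure Ω) [IsProbabilityMeasure μ]
    (i r : ℕ) (hi : 100 ≤ i) (hir : i ≤ r)
    (γ a : ℝ) (hγ : 2 * Real.log (r : ℝ) ≤ γ) (ha0 : 0 < a) (ha1 : a < 1)
    (F : ℝ → ℝ)
    (hF : ∀ x : ℝ, 0 < x →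
      F x = if x ≤ 1 then γ * (1 - (Real.log (x / (i : ℝ))) ^ 2 / (Real.log (x / (r : ℝ))) ^ 2)
            else 2 * Real.log ((r : ℝ) / (i : ℝ)))
    (A : Ω → ℝ) (hAmeas : Measurable A)
    (hApos : ∀ᵐ ω ∂μ, 0 < A ω)
    (hAint : Integrable A μ)
    (hFAint : Integrable (fun ω => F (A ω)) μ)
    (hAa : ∫ ω, A ω ∂μ ≤ a) :
    ∫ ω, F (A ω) ∂μ
      ≤ γ * (1 - (Real.log (a / (i : ℝ))) ^ 2 / (Real.log (a / (r : ℝ))) ^ 2) := by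
  have hi100 : (100:ℝ) ≤ (i:ℝ) := by exact_mod_cast hi
  have hipos : (0:ℝ) < (i:ℝ) := by linarith
  have hircast : (i:ℝ) ≤ (r:ℝ) := by exact_mod_cast hir
  have hrpos : (0:ℝ) < (r:ℝ) := by linarith
  have hI2 : (2:ℝ) ≤ Real.log (i:ℝ) := by
    rw [Real.le_log_iff_exp_le hipos]
    have h1 : Real.exp 2 = Real.exp 1 * Real.exp 1 := by rw [← Real.exp_add]; norm_num
    nlinarith [Real.exp_one_lt_d9, Real.exp_pos 1]
  have hIR : Real.log (i:ℝ) ≤ Real.log (r:ℝ) := Real.log_le_log hipos hircast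
  obtain ⟨m, hm0, hkey⟩ := stmt13_tangent γ (Real.log (i:ℝ)) (Real.log (r:ℝ)) a hI2 hIR hγ ha0 ha1
  set C : ℝ := γ * (1 - (Real.log a - Real.log (i:ℝ)) ^ 2 /
      (Real.log a - Real.log (r:ℝ)) ^ 2) with hC
  have hbd : ∀ᵐ ω ∂μ, F (A ω) ≤ (C - m * a) + m * A ω := by
    filter_upwards [hApos] with ω hω
    have h := hkey (A ω) hω
    rw [hF (A ω) hω, Real.log_div hω.ne' hipos.ne', Real.log_div hω.ne' hrpos.ne',
      Real.log_div hrpos.ne' hipos.ne']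
    linarith [h]
  have hlin : Integrable (fun ω => (C - m * a) + m * A ω) μ :=
    (integrable_const _).add (hAint.const_mul m)
  have h1 : ∫ ω, F (A ω) ∂μ ≤ ∫ ω, ((C - m * a) + m * A ω) ∂μ :=
    integral_mono_ae hFAint hlin hbd
  have h2 : ∫ ω, ((C - m * a) + m * A ω) ∂μ = (C - m * a) + m * ∫ ω, A ω ∂μ := by
    rw [integral_add (integrable_const _) (hAint.const_mul m), integral_const_mul]
    simp
  have hm : m * ∫ ω, A ω ∂μ ≤ m * a := mul_le_mul_of_nonneg_left hAa hm0
  have hEnd : C = γ * (1 - (Real.log (a / (i:ℝ))) ^ 2 / (Real.log (a / (r:ℝ))) ^ 2) := by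
    rw [Real.log_div ha0.ne' hipos.ne', Real.log_div ha0.ne' hrpos.ne']
  linarith [h1, h2, hm, hEnd]
end

section
/- Let a, γ, i, r be real numbers with 0 < a ≤ 1, γ ≥ 0, 1 ≤ i ≤ r − 1, and r ≥ 100. Then −2γ/(r·log(a/r)) + f(i, r−1, a, γ + 2γ/(r·log(a/r))) ≤ f(i, r, a, γ). -/
open Real

set_option maxHeartbeats 1000000 in
theorem log_lb_aux (r : ℝ) (hr : 100 ≤ r) :
    1/r + 1/(5*r^2) ≤ Real.log r - Real.log (r-1) := by
  have hr0 : (0:ℝ) < r := by linarith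
  have hr1 : (0:ℝ) < r - 1 := by linarith
  obtain ⟨y, hy⟩ : ∃ y : ℝ, y = 1/r + 1/(5*r^2) := ⟨_, rfl⟩
  have hy0 : 0 ≤ y := by rw [hy]; positivity
  have hinv : 1/r ≤ 1/100 := by
    rw [div_le_div_iff₀ hr0 (by norm_num)]; linarith
  have hinv2 : 1/(5*r^2) ≤ 1/100 := by
    rw [div_le_div_iff₀ (by positivity) (by norm_num)]; nlinarith
  have hy1 : y ≤ 1 := by rw [hy]; linarith
  have h := Real.exp_bound' hy0 hy1 (n := 3) (by norm_num)
  norm_num [Finset.sum_range_succ, Nat.factorial] at h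
  have hyr : y * r = 1 + 1/(5*r) := by rw [hy]; field_simp
  have h5 : 1/(5*r) ≤ 1/500 := by
    rw [div_le_div_iff₀ (by positivity) (by norm_num)]; linarith
  have h5' : (0:ℝ) ≤ 1/(5*r) := by positivity
  have hyr' : y * r ≤ 1.002 := by rw [hyr]; linarith
  have hyr0 : 0 ≤ y * r := mul_nonneg hy0 hr0.le
  have hy2 : y^2 * r^2 ≤ 1.002^2 := by nlinarith
  have hy3 : y^3 * r^3 ≤ 1.002^3 := by nlinarith
  have hkey : Real.exp y ≤ r/(r-1) := by
    have hyge : 1/r ≤ y := by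
      have : (0:ℝ) ≤ 1/(5*r^2) := by positivity
      rw [hy]; linarith
    have hy02 : y ≤ 0.02 := by rw [hy]; linarith
    have t1 : y^2*r ≤ 1.002*y := by nlinarith
    have t2 : y^3*r ≤ 1.002*y^2 := by nlinarith [sq_nonneg y, mul_nonneg hy0 hy0]
    have t3 : y^2 ≤ 0.02*y := by nlinarith
    have hylb : 1/(5*r) ≤ y/5 := by
      have e : 1/(5*r) = (1/r)/5 := by ring
      rw [e]; linarith
    have hgoal : 1 + y + y^2/2 + y^3 * (2/9) ≤ r/(r-1) := by
      rw [le_div_iff₀ hr1]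
      linarith [hyr, t1, t2, t3, hylb, mul_nonneg (mul_nonneg hy0 hy0) hy0, mul_nonneg hy0 hy0]
    calc Real.exp y ≤ 1 + y + y^2/2 + y^3 * (2/9) := by linarith [h]
      _ ≤ r/(r-1) := hgoal
  have h2 := (Real.le_log_iff_exp_le (show (0:ℝ) < r/(r-1) by positivity)).2 hkey
  rw [Real.log_div hr0.ne' hr1.ne'] at h2
  rw [hy] at h2
  exact h2

/-- With `f(i,ρ,a,γ) = γ(1 - (log(a/i))²/(log(a/ρ))²)`: for `0 < a ≤ 1`, `γ ≥ 0`,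
`1 ≤ i ≤ r - 1`, `r ≥ 100`:
`-2γ/(r log(a/r)) + f(i, r-1, a, γ + 2γ/(r log(a/r))) ≤ f(i, r, a, γ)`. -/
theorem stmt15 (a γ i r : ℝ) (ha0 : 0 < a) (ha1 : a ≤ 1) (hγ : 0 ≤ γ)
    (hi : 1 ≤ i) (hir : i ≤ r - 1) (hr : 100 ≤ r) :
    -(2 * γ) / (r * Real.log (a / r))
        + (γ + 2 * γ / (r * Real.log (a / r))) *
            (1 - (Real.log (a / i)) ^ 2 / (Real.log (a / (r - 1))) ^ 2)
      ≤ γ * (1 - (Real.log (a / i)) ^ 2 / (Real.log (a / r)) ^ 2) := by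
  have hr0 : (0:ℝ) < r := by linarith
  have hr1 : (0:ℝ) < r - 1 := by linarith
  have hi0 : (0:ℝ) < i := by linarith
  have hla : Real.log a ≤ 0 := Real.log_nonpos ha0.le ha1
  have he4 : Real.exp 4 < 99 := by
    have h1 : Real.exp 1 < 2.7182818286 := Real.exp_one_lt_d9
    have h4 : Real.exp 4 = (Real.exp 1) ^ (4:ℕ) := by
      rw [← Real.exp_nat_mul]; norm_num
    rw [h4]
    have h5 : (Real.exp 1)^(4:ℕ) < 2.7182818286 ^ (4:ℕ) :=
      pow_lt_pow_left₀ h1 (Real.exp_pos 1).le (by norm_num)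
    nlinarith [h5]
  have hlr4 : 4 < Real.log r := (Real.lt_log_iff_exp_lt hr0).2 (by linarith)
  have hlr14 : 4 < Real.log (r-1) := (Real.lt_log_iff_exp_lt hr1).2 (by linarith)
  obtain ⟨δ, hδdef⟩ : ∃ d : ℝ, d = Real.log r - Real.log (r-1) := ⟨_, rfl⟩
  have hδub : δ ≤ 1/(r-1) := by
    have h := Real.log_le_sub_one_of_pos (x := r/(r-1)) (by positivity)
    rw [Real.log_div hr0.ne' hr1.ne'] at h
    have h2 : r/(r-1) - 1 = 1/(r-1) := by field_simp; ring
    rw [hδdef]; linarith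
  have hδlb : 1/r + 1/(5*r^2) ≤ δ := by rw [hδdef]; exact log_lb_aux r hr
  obtain ⟨X, hXdef⟩ : ∃ x : ℝ, x = Real.log r - Real.log a := ⟨_, rfl⟩
  obtain ⟨Y, hYdef⟩ : ∃ x : ℝ, x = Real.log (r-1) - Real.log a := ⟨_, rfl⟩
  have hX4 : 4 ≤ X := by rw [hXdef]; linarith
  have hY4 : 4 ≤ Y := by rw [hYdef]; linarith
  have hδpos : 0 < δ := by
    have : (0:ℝ) < 1/r + 1/(5*r^2) := by positivity
    linarith
  have hYX : Y = X - δ := by rw [hXdef, hYdef, hδdef]; ring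
  have hkey2 : Y^2 ≤ X^2 - 2*X/r := by
    have hA : 1/(5*r^2) ≤ δ - 1/r := by linarith
    have hB : 8/(5*r^2) ≤ 2*X*(δ - 1/r) := by
      have t0 : (0:ℝ) ≤ 1/(5*r^2) := by positivity
      have p1 : 0 ≤ 2*X*(δ - 1/r - 1/(5*r^2)) :=
        mul_nonneg (by linarith) (by linarith)
      have p2 : 0 ≤ (X-4) * (1/(5*r^2)) := mul_nonneg (by linarith) t0
      have q1 : 0 ≤ 2*X*δ - 2*X*(1/r) - 2*X*(1/(5*r^2)) := by linarith [p1]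
      have q2 : 4*(1/(5*r^2)) ≤ X*(1/(5*r^2)) := by linarith [p2]
      have q3 : (8:ℝ)/(5*r^2) = 8*(1/(5*r^2)) := by ring
      rw [q3]
      linarith [q1, q2]
    have hC : δ^2 ≤ 1/(r-1)^2 := by
      have h := pow_le_pow_left₀ hδpos.le hδub 2
      calc δ^2 ≤ (1/(r-1))^2 := h
        _ = 1/(r-1)^2 := by rw [div_pow]; norm_num
    have hD : 1/(r-1)^2 ≤ 8/(5*r^2) := by
      rw [div_le_div_iff₀ (by positivity) (by positivity)]
      nlinarith
    have h1 : 2*X/r ≤ 2*X*δ - δ^2 := by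
      have e : 2*X*(δ - 1/r) = 2*X*δ - 2*X/r := by ring
      linarith [e ▸ hB]
    nlinarith [hYX, h1]
  have hLr : Real.log (a / r) = -X := by
    rw [Real.log_div ha0.ne' hr0.ne', hXdef]; ring
  have hLr1 : Real.log (a / (r-1)) = -Y := by
    rw [Real.log_div ha0.ne' hr1.ne', hYdef]; ring
  rw [hLr, hLr1]
  have hX0 : (0:ℝ) < X := by linarith
  have hY0 : (0:ℝ) < Y := by linarith
  obtain ⟨Li, hLi⟩ : ∃ x : ℝ, x = Real.log (a/i) := ⟨_, rfl⟩
  rw [← hLi]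
  have hstep : Li^2 / X^2 ≤ (1 - 2/(r*X)) * (Li^2 / Y^2) := by
    have h1 : 1/X^2 ≤ (1 - 2/(r*X)) / Y^2 := by
      rw [div_le_div_iff₀ (by positivity) (by positivity)]
      have h2 : (1 - 2/(r*X)) * X^2 = X^2 - 2*X/r := by field_simp
      rw [h2]
      linarith [hkey2]
    calc Li^2/X^2 = Li^2 * (1/X^2) := by ring
      _ ≤ Li^2 * ((1 - 2/(r*X))/Y^2) := mul_le_mul_of_nonneg_left h1 (sq_nonneg _)
      _ = (1 - 2/(r*X)) * (Li^2/Y^2) := by ring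
  have hmul := mul_le_mul_of_nonneg_left hstep hγ
  have e1 : (-X)^2 = X^2 := by ring
  have e2 : (-Y)^2 = Y^2 := by ring
  rw [e1, e2]
  have e3 : -(2*γ)/(r * -X) = 2*γ/(r*X) := by
    rw [mul_neg, neg_div_neg_eq]
  have e4 : 2*γ/(r * -X) = -(2*γ/(r*X)) := by
    rw [mul_neg, div_neg]
  rw [e3, e4]
  have hrX : (0:ℝ) < r * X := by positivity
  have expand2 : γ * ((1 - 2/(r*X)) * (Li^2/Y^2))
      = γ * (Li^2/Y^2) - 2*γ/(r*X) * (Li^2/Y^2) := by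
    field_simp
  rw [expand2] at hmul
  linarith [hmul]
end

section
/- Let γ, i, r be real numbers with γ ≥ 0, 1 ≤ i ≤ r, and r ≥ 21. Then the function g(x) = γ·(1 − (log(x/i))²/(log(x/r))²) is nondecreasing and concave on the interval (0, 1]. -/
open Real Set

lemma stmt16_aux (a b : ℝ) (ha : 0 ≤ a) (hab : a ≤ b) (hb : 3 ≤ b) :
    ConvexOn ℝ (Set.Ioc (0:ℝ) 1) (fun x : ℝ => 1 + (b - a) * (Real.log x - b)⁻¹) := by
  have hφ : ConvexOn ℝ (Set.Ioc (0:ℝ) 1) (fun x : ℝ => (Real.log x - b)⁻¹) := by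
    have hint : interior (Set.Ioc (0:ℝ) 1) = Set.Ioo (0:ℝ) 1 := interior_Ioc
    apply convexOn_of_hasDerivWithinAt2_nonneg (f' := fun x => -(x⁻¹ / (Real.log x - b)^2))
      (f'' := fun x => ((Real.log x - b)^2 + 2*(Real.log x - b)) / (x^2 * (Real.log x - b)^4))
      (convex_Ioc 0 1)
    · -- continuity
      apply ContinuousOn.inv₀
      · exact (Real.continuousOn_log.mono (by intro x hx; exact ne_of_gt hx.1)).sub
          continuousOn_const
      · intro x hx
        have h1 : Real.log x ≤ 0 := Real.log_nonpos (le_of_lt hx.1) hx.2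
        intro h
        nlinarith
    · rw [hint]
      intro x hx
      have hx0 : (0:ℝ) < x := hx.1
      have hL : Real.log x - b < 0 := by
        have : Real.log x ≤ 0 := Real.log_nonpos (le_of_lt hx0) (le_of_lt hx.2)
        linarith
      have h1 : HasDerivAt (fun y : ℝ => Real.log y - b) x⁻¹ x :=
        (Real.hasDerivAt_log hx0.ne').sub_const b
      have h2 : HasDerivAt (fun y : ℝ => (Real.log y - b)⁻¹)
          (-x⁻¹ / (Real.log x - b)^2) x := h1.inv hL.ne
      have : HasDerivAt (fun y : ℝ => (Real.log y - b)⁻¹)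
          (-(x⁻¹ / (Real.log x - b)^2)) x := by
        convert h2 using 1; ring
      exact this.hasDerivWithinAt
    · rw [hint]
      intro x hx
      have hx0 : (0:ℝ) < x := hx.1
      have hL : Real.log x - b < 0 := by
        have : Real.log x ≤ 0 := Real.log_nonpos (le_of_lt hx0) (le_of_lt hx.2)
        linarith
      have h1 : HasDerivAt (fun y : ℝ => Real.log y - b) x⁻¹ x :=
        (Real.hasDerivAt_log hx0.ne').sub_const b
      have hnum : HasDerivAt (fun y : ℝ => y⁻¹) (-(x ^ 2)⁻¹) x := hasDerivAt_inv hx0.ne'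
      have hden : HasDerivAt (fun y : ℝ => (Real.log y - b)^2)
          ((2:ℕ) * (Real.log x - b) ^ 1 * x⁻¹) x := h1.pow 2
      have hLsq : (Real.log x - b)^2 ≠ 0 := pow_ne_zero _ hL.ne
      have hdiv := (hnum.div hden hLsq).neg
      have hne : Real.log x - b ≠ 0 := hL.ne
      have hxne : x ≠ 0 := hx0.ne'
      have : HasDerivAt (fun y : ℝ => -(y⁻¹ / (Real.log y - b)^2))
          (((Real.log x - b)^2 + 2*(Real.log x - b)) / (x^2 * (Real.log x - b)^4)) x := by
        refine hdiv.congr_deriv ?_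
        push_cast
        field_simp
        ring
      exact this.hasDerivWithinAt
    · rw [hint]
      intro x hx
      have hx0 : (0:ℝ) < x := hx.1
      have hL : Real.log x - b ≤ -3 := by
        have : Real.log x ≤ 0 := Real.log_nonpos (le_of_lt hx0) (le_of_lt hx.2)
        linarith
      apply div_nonneg
      · nlinarith
      · positivity
  have h1 := (hφ.smul (by linarith : (0:ℝ) ≤ b - a)).add_const 1
  exact h1.congr (by intro x hx; simp [smul_eq_mul]; ring)

set_option maxHeartbeats 1000000 in
/-- For `γ ≥ 0`, `1 ≤ i ≤ r`, `r ≥ 21`, the function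
`g(x) = γ(1 - (log(x/i))²/(log(x/r))²)` is nondecreasing and concave on `(0, 1]`. -/
theorem stmt16 (γ i r : ℝ) (hγ : 0 ≤ γ) (hi : 1 ≤ i) (hir : i ≤ r) (hr : 21 ≤ r) :
    MonotoneOn (fun x : ℝ =>
        γ * (1 - (Real.log (x / i)) ^ 2 / (Real.log (x / r)) ^ 2)) (Set.Ioc 0 1) ∧
    ConcaveOn ℝ (Set.Ioc 0 1) (fun x : ℝ =>
        γ * (1 - (Real.log (x / i)) ^ 2 / (Real.log (x / r)) ^ 2)) := by
  have hi0 : (0:ℝ) < i := lt_of_lt_of_le one_pos hi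
  have hr0 : (0:ℝ) < r := by linarith
  set a := Real.log i with ha_def
  set b := Real.log r with hb_def
  have ha : 0 ≤ a := Real.log_nonneg hi
  have hab : a ≤ b := Real.log_le_log hi0 hir
  have hb : 3 ≤ b := by
    rw [hb_def, Real.le_log_iff_exp_le hr0]
    have h3 : Real.exp 3 = (Real.exp 1)^3 := by
      rw [← Real.exp_nat_mul]; norm_num
    have he := Real.exp_one_lt_d9
    have he0 := Real.exp_pos 1
    have h4 : (Real.exp 1)^3 < (2.7182818286:ℝ)^3 :=
      pow_lt_pow_left₀ he he0.le (by norm_num)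
    nlinarith
  -- basic facts on the set
  have hlog : ∀ x ∈ Set.Ioc (0:ℝ) 1, Real.log x ≤ 0 ∧ Real.log x - b < 0 ∧
      Real.log (x/i) = Real.log x - a ∧ Real.log (x/r) = Real.log x - b := by
    intro x hx
    have hx0 : (0:ℝ) < x := hx.1
    have h0 : Real.log x ≤ 0 := Real.log_nonpos (le_of_lt hx0) hx.2
    exact ⟨h0, by linarith, Real.log_div hx0.ne' hi0.ne', Real.log_div hx0.ne' hr0.ne'⟩
  constructor
  · -- Monotone
    intro x hx y hy hxy
    obtain ⟨hx0, hxL, hxi, hxr⟩ := hlog x hx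
    obtain ⟨hy0, hyL, hyi, hyr⟩ := hlog y hy
    simp only [hxi, hxr, hyi, hyr]
    have hlxy : Real.log x ≤ Real.log y := Real.log_le_log hx.1 hxy
    set u := Real.log x
    set v := Real.log y
    -- show (v-a)^2/(v-b)^2 ≤ (u-a)^2/(u-b)^2
    have key : (v-a)^2/(v-b)^2 ≤ (u-a)^2/(u-b)^2 := by
      have hvb : (0:ℝ) < (v-b)^2 := pow_two_pos_of_ne_zero (by intro h; nlinarith)
      have hub : (0:ℝ) < (u-b)^2 := pow_two_pos_of_ne_zero (by intro h; nlinarith)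
      rw [div_le_div_iff₀ hvb hub]
      have h1 : 0 ≤ a - v := by linarith
      have h2 : 0 ≤ a - u := by linarith
      have h3 : 0 < b - v := by linarith
      have h4 : 0 < b - u := by linarith
      have hle : (a-v)*(b-u) ≤ (a-u)*(b-v) := by nlinarith
      have h5 : 0 ≤ (a-v)*(b-u) := by positivity
      calc (v-a)^2 * (u-b)^2 = ((a-v)*(b-u))^2 := by ring
        _ ≤ ((a-u)*(b-v))^2 := by nlinarith
        _ = (u-a)^2 * (v-b)^2 := by ring
    nlinarith [key]
  · -- Concave
    have hT := stmt16_aux a b ha hab hb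
    have hT0 : ∀ ⦃x⦄, x ∈ Set.Ioc (0:ℝ) 1 →
        0 ≤ 1 + (b - a) * (Real.log x - b)⁻¹ := by
      intro x hx
      obtain ⟨h0, hL, _, _⟩ := hlog x hx
      have hne : Real.log x - b ≠ 0 := hL.ne
      have hne2 : b - Real.log x ≠ 0 := by intro h; apply hne; linarith
      have heq : 1 + (b - a) * (Real.log x - b)⁻¹ = (a - Real.log x)/(b - Real.log x) := by
        field_simp
        ring
      rw [heq]
      exact div_nonneg (by linarith) (by linarith)
    have hT2 := hT.pow hT0 2
    have hneg := hT2.neg.add_const 1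
    have hfinal := hneg.smul hγ
    apply hfinal.congr
    intro x hx
    obtain ⟨h0, hL, hxi, hxr⟩ := hlog x hx
    have hne : Real.log x - b ≠ 0 := hL.ne
    simp only [Pi.add_apply, Pi.neg_apply, Pi.pow_apply, smul_eq_mul, hxi, hxr]
    rw [show (1 + (b - a) * (Real.log x - b)⁻¹) = (Real.log x - a)/(Real.log x - b) by
      field_simp; ring]
    rw [div_pow]
    ring
end

section
/- Let β, δ be real numbers with 0 ≤ β ≤ 2 and β ≤ δ. Then 10/9 ≤ (δ+2)·(5−2β+2δ)/(3−β+δ)² ≤ 20/9. Moreover, if β ≤ 3/2 then (δ+2)·(5−2β+2δ)/(3−β+δ)² ≤ 2. -/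
/-- For `0 ≤ β ≤ 2` and `β ≤ δ`: `10/9 ≤ h̄(0) ≤ 20/9`, where
`h̄(0) = (δ+2)(5-2β+2δ)/(3-β+δ)²`; moreover `h̄(0) ≤ 2` if `β ≤ 3/2`. -/
theorem stmt17 (β δ : ℝ) (hβ0 : 0 ≤ β) (hβ2 : β ≤ 2) (hβδ : β ≤ δ) :
    (10 / 9 ≤ (δ + 2) * (5 - 2 * β + 2 * δ) / (3 - β + δ) ^ 2
      ∧ (δ + 2) * (5 - 2 * β + 2 * δ) / (3 - β + δ) ^ 2 ≤ 20 / 9)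
    ∧ (β ≤ 3 / 2 → (δ + 2) * (5 - 2 * β + 2 * δ) / (3 - β + δ) ^ 2 ≤ 2) := by
  have hd : (0:ℝ) < 3 - β + δ := by linarith
  have hd2 : (0:ℝ) < (3 - β + δ) ^ 2 := by positivity
  refine ⟨⟨?_, ?_⟩, fun h32 => ?_⟩
  · rw [le_div_iff₀ hd2]; nlinarith [sq_nonneg (δ - β), mul_nonneg hβ0 (sub_nonneg.2 hβδ)]
  · rw [div_le_iff₀ hd2]; nlinarith [sq_nonneg (δ - β), mul_nonneg (sub_nonneg.2 hβ2) (sub_nonneg.2 hβδ)]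
  · rw [div_le_iff₀ hd2]; nlinarith [mul_nonneg (by linarith : (0:ℝ) ≤ 3/2 - β) (sub_nonneg.2 hβδ)]
end

section
/- Let β, δ, x be real numbers with 0 ≤ β ≤ 1, β ≤ δ, and 0 ≤ x ≤ 1. Then h̄(x) ≤ h(x), where h̄(x) = (δ+2)·(1−x)·(5−2β+2δ+x)/(3−β+δ)² and h(x) = 2·(2+δ)·(log(3−β+δ) − log(2−β+δ+x)) if x ≥ β, while h(x) = 2·(2+δ)·(log(3−β+δ) − log(2+δ)) + 2·(β−x) if x < β. -/
open Real

/-- For `0 ≤ β ≤ 1`, `β ≤ δ`, `0 ≤ x ≤ 1`: `h̄(x) ≤ h(x)`, where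
`h̄(x) = (δ+2)(1-x)(5-2β+2δ+x)/(3-β+δ)²` and `h` is the piecewise function
`h(x) = 2(2+δ)(log(3-β+δ) - log(2-β+δ+x))` for `x ≥ β`,
`h(x) = 2(2+δ)(log(3-β+δ) - log(2+δ)) + 2(β-x)` for `x < β`. -/
theorem stmt18 (β δ x : ℝ) (hβ0 : 0 ≤ β) (hβ1 : β ≤ 1) (hβδ : β ≤ δ)
    (hx0 : 0 ≤ x) (hx1 : x ≤ 1) :
    (δ + 2) * (1 - x) * (5 - 2 * β + 2 * δ + x) / (3 - β + δ) ^ 2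
      ≤ if β ≤ x then
          2 * (2 + δ) * (Real.log (3 - β + δ) - Real.log (2 - β + δ + x))
        else
          2 * (2 + δ) * (Real.log (3 - β + δ) - Real.log (2 + δ)) + 2 * (β - x) := by
  have ha : (0:ℝ) < 3 - β + δ := by linarith
  have ha2 : (0:ℝ) < (3 - β + δ) ^ 2 := by positivity
  rw [div_le_iff₀ ha2]
  split_ifs with h
  · -- case β ≤ x
    have hb : (0:ℝ) < 2 - β + δ + x := by linarith
    have hlog : Real.log ((2 - β + δ + x) / (3 - β + δ)) ≤ (2 - β + δ + x) / (3 - β + δ) - 1 :=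
      Real.log_le_sub_one_of_pos (by positivity)
    rw [Real.log_div (ne_of_gt hb) (ne_of_gt ha)] at hlog
    have key : 1 - (2 - β + δ + x) / (3 - β + δ) ≤
        Real.log (3 - β + δ) - Real.log (2 - β + δ + x) := by linarith
    have key2 : 1 - x ≤ (Real.log (3 - β + δ) - Real.log (2 - β + δ + x)) * (3 - β + δ) := by
      have := mul_le_mul_of_nonneg_right key ha.le
      have h2 : (1 - (2 - β + δ + x) / (3 - β + δ)) * (3 - β + δ) = 1 - x := by
        field_simp; ring
      linarith [this, h2.ge, h2.le]
    nlinarith [mul_le_mul_of_nonneg_left key2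
        (by nlinarith [mul_pos (show (0:ℝ) < 2 + δ by linarith) ha] : (0:ℝ) ≤ 2 * (2 + δ) * (3 - β + δ)),
      mul_nonneg (mul_nonneg (by linarith : (0:ℝ) ≤ δ + 2)
        (by linarith : (0:ℝ) ≤ 1 - x)) (by linarith : (0:ℝ) ≤ 1 - x)]
  · -- case x < β
    have hb : (0:ℝ) < 2 + δ := by linarith
    have hlog : Real.log ((2 + δ) / (3 - β + δ)) ≤ (2 + δ) / (3 - β + δ) - 1 :=
      Real.log_le_sub_one_of_pos (by positivity)
    rw [Real.log_div (ne_of_gt hb) (ne_of_gt ha)] at hlog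
    have key : 1 - (2 + δ) / (3 - β + δ) ≤
        Real.log (3 - β + δ) - Real.log (2 + δ) := by linarith
    have key2 : 1 - β ≤ (Real.log (3 - β + δ) - Real.log (2 + δ)) * (3 - β + δ) := by
      have := mul_le_mul_of_nonneg_right key ha.le
      have h2 : (1 - (2 + δ) / (3 - β + δ)) * (3 - β + δ) = 1 - β := by
        field_simp; ring
      linarith [this, h2.ge, h2.le]
    nlinarith [mul_le_mul_of_nonneg_left key2
        (by nlinarith [mul_pos (show (0:ℝ) < 2 + δ by linarith) ha] : (0:ℝ) ≤ 2 * (2 + δ) * (3 - β + δ)),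
      mul_nonneg (mul_nonneg (by linarith : (0:ℝ) ≤ δ + 2)
        (by linarith : (0:ℝ) ≤ 1 - β)) (by linarith : (0:ℝ) ≤ 1 - β),
      mul_nonneg (by linarith : (0:ℝ) ≤ β - x) (by linarith : (0:ℝ) ≤ δ - β),
      mul_nonneg (mul_nonneg (by linarith : (0:ℝ) ≤ β - x) (by linarith : (0:ℝ) ≤ 1 - β))
        (by linarith : (0:ℝ) ≤ 1 - β),
      mul_nonneg (by linarith : (0:ℝ) ≤ β - x) (by linarith : (0:ℝ) ≤ 1 - β),
      mul_nonneg (mul_nonneg (by linarith : (0:ℝ) ≤ β - x) (by linarith : (0:ℝ) ≤ 1 - β))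
        (by linarith : (0:ℝ) ≤ δ - β),
      mul_nonneg (by linarith : (0:ℝ) ≤ β - x) (by linarith : (0:ℝ) ≤ δ + 2)]
end

section
/- Let β, δ, y be real numbers with 0 ≤ β ≤ 2, β ≤ δ, and y > 0. Then the function x ↦ x·h̄(y/x) is nondecreasing on the set of reals x ≥ y, where h̄(z) = (δ+2)·(1−z)·(5−2β+2δ+z)/(3−β+δ)². -/
/-- For `0 ≤ β ≤ 2`, `β ≤ δ`, `y > 0`, the map `x ↦ x · h̄(y/x)` with
`h̄(z) = (δ+2)(1-z)(5-2β+2δ+z)/(3-β+δ)²` is nondecreasing on `x ≥ y`. -/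
theorem stmt19 (β δ y : ℝ) (hβ0 : 0 ≤ β) (hβ2 : β ≤ 2) (hβδ : β ≤ δ) (hy : 0 < y) :
    MonotoneOn (fun x : ℝ =>
        x * ((δ + 2) * (1 - y / x) * (5 - 2 * β + 2 * δ + y / x) / (3 - β + δ) ^ 2))
      (Set.Ici y) := by
  intro x1 hx1 x2 hx2 h12
  have hx1p : 0 < x1 := lt_of_lt_of_le hy hx1
  have hx2p : 0 < x2 := lt_of_lt_of_le hy hx2
  have hden : (0:ℝ) < (3 - β + δ) ^ 2 := by nlinarith
  have key : x1 * ((δ + 2) * (1 - y / x1) * (5 - 2 * β + 2 * δ + y / x1)) ≤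
      x2 * ((δ + 2) * (1 - y / x2) * (5 - 2 * β + 2 * δ + y / x2)) := by
    field_simp
    have ha : (0:ℝ) ≤ 5 - 2 * β + 2 * δ := by nlinarith
    have h3 : (0:ℝ) ≤ (δ + 2) * (x2 - x1) * ((5 - 2 * β + 2 * δ) * (x1 * x2) + y ^ 2) * (x1 * x2) := by
      apply mul_nonneg
      apply mul_nonneg
      apply mul_nonneg
      · nlinarith
      · linarith
      · positivity
      · positivity
    nlinarith [h3, mul_nonneg (mul_nonneg (by linarith : (0:ℝ) ≤ δ + 2) (sub_nonneg.2 h12)) (add_nonneg (mul_nonneg ha (mul_pos hx1p hx2p).le) (sq_nonneg y))]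
  simp only [← mul_div_assoc]
  exact div_le_div_of_nonneg_right key hden.le
end
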